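/- arXiv:2102.00152 — 13 statements merged into one kernel-verified Lean document; each statement's English description precedes it below -/
import Mathlib

section
/- Let μ be a belief on a nonempty finite set S, let A ⊆ S satisfy μ(A) > 0, let δ ∈ [0,1], and define the belief μ_A by μ_A(s) = δ·μ(s) + (1−δ)·B(μ,A)(s). Then for all acts f, g: if ∑_{s∈S} u(f(s))μ(s) ≥ ∑_{s∈S} u(g(s))μ(s) and ∑_{s∈S} u((fAg)(s))μ(s) ≥ ∑_{s∈S} u(g(s))μ(s), then ∑_{s∈S} u(f(s))μ_A(s) ≥ ∑_{s∈S} u(g(s))μ_A(s). Moreover, if both premise inequalities are strict, then the conclusion inequality is strict. (Necessity direction of Theorem 1: a conservative SEU representation satisfies Dynamic Conservatism, including its strict part.) -/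
open Finset

noncomputable def bayes {S : Type*} [DecidableEq S] (μ : S → ℝ) (A : Finset S) : S → ℝ :=
  fun s => if s ∈ A then μ s / ∑ t ∈ A, μ t else 0

def splice {S X : Type*} [DecidableEq S] (f g : S → X) (A : Finset S) : S → X :=
  fun s => if s ∈ A then f s else g s

/-- Necessity direction of Theorem 1: a conservative SEU representation satisfies
Dynamic Conservatism, including its strict part. -/
theorem stmt0 {S X : Type*} [Fintype S] [DecidableEq S] [Nonempty S]
    (μ : S → ℝ) (hμ0 : ∀ s, 0 ≤ μ s) (hμ1 : ∑ s, μ s = 1)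
    (A : Finset S) (hA : 0 < ∑ s ∈ A, μ s)
    (δ : ℝ) (hδ : δ ∈ Set.Icc (0:ℝ) 1)
    (u : X → ℝ)
    (μA : S → ℝ) (hμA : ∀ s, μA s = δ * μ s + (1 - δ) * bayes μ A s)
    (f g : S → X) :
    ((∑ s, u (f s) * μ s ≥ ∑ s, u (g s) * μ s →
      ∑ s, u (splice f g A s) * μ s ≥ ∑ s, u (g s) * μ s →
      ∑ s, u (f s) * μA s ≥ ∑ s, u (g s) * μA s) ∧
     (∑ s, u (f s) * μ s > ∑ s, u (g s) * μ s →
      ∑ s, u (splice f g A s) * μ s > ∑ s, u (g s) * μ s →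
      ∑ s, u (f s) * μA s > ∑ s, u (g s) * μA s)) := by
  set m : ℝ := ∑ t ∈ A, μ t with hm
  have hAsub : A ⊆ Finset.univ := Finset.subset_univ A
  have key : ∀ h : S → X, ∑ s, u (h s) * μA s
      = δ * ∑ s, u (h s) * μ s + (1 - δ) / m * ∑ s ∈ A, u (h s) * μ s := by
    intro h
    have : ∑ s, u (h s) * bayes μ A s = (1 / m) * ∑ s ∈ A, u (h s) * μ s := by
      rw [← Finset.sum_subset hAsub (f := fun s => u (h s) * bayes μ A s)
        (by intro s _ hs; simp [bayes, hs])]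
      rw [Finset.mul_sum]
      refine Finset.sum_congr rfl fun s hs => ?_
      simp [bayes, hs]; ring
    have e1 : ∑ s, u (h s) * μA s
        = ∑ s, (δ * (u (h s) * μ s) + (1 - δ) * (u (h s) * bayes μ A s)) :=
      Finset.sum_congr rfl fun s _ => by rw [hμA]; ring
    rw [e1, Finset.sum_add_distrib, ← Finset.mul_sum, ← Finset.mul_sum, this]; ring
  have spl : ∑ s, u (splice f g A s) * μ s - ∑ s, u (g s) * μ s
      = ∑ s ∈ A, u (f s) * μ s - ∑ s ∈ A, u (g s) * μ s := by
    rw [← Finset.sum_sdiff hAsub (f := fun s => u (splice f g A s) * μ s),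
        ← Finset.sum_sdiff hAsub (f := fun s => u (g s) * μ s)]
    have h1 : ∑ s ∈ Finset.univ \ A, u (splice f g A s) * μ s
        = ∑ s ∈ Finset.univ \ A, u (g s) * μ s := by
      refine Finset.sum_congr rfl fun s hs => ?_
      simp only [Finset.mem_sdiff] at hs
      simp [splice, hs.2]
    have h2 : ∑ s ∈ A, u (splice f g A s) * μ s = ∑ s ∈ A, u (f s) * μ s := by
      refine Finset.sum_congr rfl fun s hs => ?_
      simp [splice, hs]
    rw [h1, h2]; ring
  have hδ0 : 0 ≤ δ := hδ.1
  have hδ1 : δ ≤ 1 := hδ.2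
  have hc : 0 ≤ (1 - δ) / m := div_nonneg (by linarith) hA.le
  constructor
  · intro h1 h2
    rw [ge_iff_le, ← sub_nonneg, key f, key g]
    have h2' := sub_nonneg.mpr (spl ▸ sub_nonneg.mpr h2)
    have h1' := sub_nonneg.mpr h1
    nlinarith [mul_nonneg hδ0 h1', mul_nonneg hc (sub_nonneg.mpr (spl ▸ sub_nonneg.mpr h2))]
  · intro h1 h2
    rw [gt_iff_lt, ← sub_pos, key f, key g]
    have h2' : (0:ℝ) < ∑ s ∈ A, u (f s) * μ s - ∑ s ∈ A, u (g s) * μ s := by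
      rw [← spl]; linarith
    have h1' : (0:ℝ) < ∑ s, u (f s) * μ s - ∑ s, u (g s) * μ s := by linarith
    rcases eq_or_lt_of_le hδ0 with h0 | h0
    · have : (1 - δ) / m > 0 := div_pos (by linarith [h0]) hA
      nlinarith
    · nlinarith [mul_nonneg hc h2'.le, mul_pos h0 h1']
end

section
/- Let μ and μ_A be beliefs on a nonempty finite set S, let A ⊆ S satisfy μ(A) > 0, and suppose the interval [−1,1] is contained in the range of u : X → ℝ. Assume the Dynamic Conservatism condition: for all acts f, g, if ∑_{s∈S} u(f(s))μ(s) ≥ ∑_{s∈S} u(g(s))μ(s) and ∑_{s∈S} u((fAg)(s))μ(s) ≥ ∑_{s∈S} u(g(s))μ(s), then ∑_{s∈S} u(f(s))μ_A(s) ≥ ∑_{s∈S} u(g(s))μ_A(s). Then there exists δ ∈ [0,1] such that μ_A(s) = δ·μ(s) + (1−δ)·B(μ,A)(s) for every s ∈ S. (Sufficiency direction of Theorem 1: the posterior is a convex combination of the prior and the Bayesian posterior.) -/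
open Finset

/-- Sufficiency direction of Theorem 1: under Dynamic Conservatism the posterior
is a convex combination of the prior and the Bayesian posterior. -/
theorem stmt1 {S X : Type*} [Fintype S] [DecidableEq S] [Nonempty S]
    (μ μA : S → ℝ)
    (hμ0 : ∀ s, 0 ≤ μ s) (hμ1 : ∑ s, μ s = 1)
    (hμA0 : ∀ s, 0 ≤ μA s) (hμA1 : ∑ s, μA s = 1)
    (A : Finset S) (hA : 0 < ∑ s ∈ A, μ s)
    (u : X → ℝ) (hu : Set.Icc (-1:ℝ) 1 ⊆ Set.range u)
    (hDC : ∀ f g : S → X,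
      ∑ s, u (f s) * μ s ≥ ∑ s, u (g s) * μ s →
      ∑ s, u (splice f g A s) * μ s ≥ ∑ s, u (g s) * μ s →
      ∑ s, u (f s) * μA s ≥ ∑ s, u (g s) * μA s) :
    ∃ δ ∈ Set.Icc (0:ℝ) 1, ∀ s, μA s = δ * μ s + (1 - δ) * bayes μ A s := by
  classical
  -- a consequence with utility value 0
  obtain ⟨x0, hx0⟩ := hu (show (0:ℝ) ∈ Set.Icc (-1:ℝ) 1 by norm_num)
  -- the key linear inequality
  have key : ∀ d : S → ℝ, 0 ≤ ∑ s, d s * μ s → 0 ≤ ∑ s ∈ A, d s * μ s →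
      0 ≤ ∑ s, d s * μA s := by
    intro d h1 h2
    set M : ℝ := ∑ s, |d s| with hM
    have hM0 : 0 ≤ M := Finset.sum_nonneg fun s _ => abs_nonneg _
    set c : ℝ := (1 + M)⁻¹ with hc
    have hc0 : 0 < c := by positivity
    have hbound : ∀ s, c * d s ∈ Set.Icc (-1:ℝ) 1 := by
      intro s
      have h3 : |d s| ≤ M :=
        Finset.single_le_sum (f := fun s => |d s|) (fun s _ => abs_nonneg _) (mem_univ s)
      have h4 : |c * d s| ≤ 1 := by
        rw [abs_mul, abs_of_pos hc0]
        rw [hc, inv_mul_le_iff₀ (by positivity)]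
        linarith
      have := abs_le.mp h4
      exact ⟨this.1, this.2⟩
    choose f hf using fun s => hu (hbound s)
    have hDCres := hDC f (fun _ => x0) ?_ ?_
    · have hl : ∑ s, u (f s) * μA s = c * ∑ s, d s * μA s := by
        rw [Finset.mul_sum]; exact Finset.sum_congr rfl fun s _ => by rw [hf s]; ring
      have hr : ∑ s, u ((fun _ => x0) s) * μA s = 0 := by simp [hx0]
      rw [hl, hr] at hDCres
      nlinarith
    · have hl : ∑ s, u (f s) * μ s = c * ∑ s, d s * μ s := by
        rw [Finset.mul_sum]; exact Finset.sum_congr rfl fun s _ => by rw [hf s]; ring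
      have hr : ∑ s, u ((fun _ => x0) s) * μ s = 0 := by simp [hx0]
      rw [hl, hr]
      positivity
    · have hr : ∑ s, u ((fun _ => x0) s) * μ s = 0 := by simp [hx0]
      have hl : ∑ s, u (splice f (fun _ => x0) A s) * μ s
          = c * ∑ s ∈ A, d s * μ s := by
        rw [Finset.mul_sum]
        rw [← Finset.sum_filter_add_sum_filter_not Finset.univ (fun s => s ∈ A)]
        have h5 : ∑ s ∈ Finset.univ.filter (fun s => ¬ s ∈ A),
            u (splice f (fun _ => x0) A s) * μ s = 0 := by
          apply Finset.sum_eq_zero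
          intro s hs
          simp only [Finset.mem_filter] at hs
          simp [splice, hs.2, hx0]
        rw [h5, add_zero]
        rw [show Finset.univ.filter (fun s => s ∈ A) = A by
          ext s; simp]
        exact Finset.sum_congr rfl fun s hs => by simp [splice, hs, hf s]; ring
      rw [hl, hr]
      positivity
  have eqkey : ∀ d : S → ℝ, (∑ s, d s * μ s) = 0 → (∑ s ∈ A, d s * μ s) = 0 →
      (∑ s, d s * μA s) = 0 := by
    intro d h1 h2
    have k1 := key d (le_of_eq h1.symm) (le_of_eq h2.symm)
    have k2 := key (fun s => -d s) (by simp [neg_mul, Finset.sum_neg_distrib, h1])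
      (by simp [neg_mul, Finset.sum_neg_distrib, h2])
    simp only [neg_mul, Finset.sum_neg_distrib] at k2
    linarith
  -- states of prior measure zero have posterior measure zero
  have hzero : ∀ s, μ s = 0 → μA s = 0 := by
    intro s hs
    have := key (fun t => if t = s then (-1:ℝ) else 0) ?_ ?_
    · simp only [ite_mul, neg_mul, one_mul, zero_mul, Finset.sum_ite_eq',
        Finset.mem_univ, if_true] at this
      have := hμA0 s
      linarith
    · simp [ite_mul, Finset.sum_ite_eq', hs]
    · simp [ite_mul, Finset.sum_ite_eq', hs]
  -- ratio equality within A or within the complement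
  have hratio : ∀ s t : S, (s ∈ A ↔ t ∈ A) → μA s * μ t = μA t * μ s := by
    intro s t hst
    rcases eq_or_ne s t with rfl | hne
    · ring
    have := eqkey (fun r => (if r = s then μ t else 0) - if r = t then μ s else 0) ?_ ?_
    · simp only [sub_mul, ite_mul, zero_mul, Finset.sum_sub_distrib,
        Finset.sum_ite_eq', Finset.mem_univ, if_true] at this
      linarith
    · simp only [sub_mul, ite_mul, zero_mul, Finset.sum_sub_distrib,
        Finset.sum_ite_eq', Finset.mem_univ, if_true]
      ring
    · simp only [sub_mul, ite_mul, zero_mul, Finset.sum_sub_distrib,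
        Finset.sum_ite_eq']
      by_cases h : s ∈ A
      · rw [if_pos h, if_pos (hst.mp h)]; ring
      · rw [if_neg h, if_neg (fun ht => h (hst.mpr ht))]; ring
  set p : ℝ := ∑ s ∈ A, μ s with hp
  have hp1 : p ≤ 1 := by
    rw [← hμ1]
    exact Finset.sum_le_sum_of_subset_of_nonneg (Finset.subset_univ A)
      (fun s _ _ => hμ0 s)
  -- posterior probability of A is at least p
  have hAbound : p ≤ ∑ s ∈ A, μA s := by
    have := key (fun s => (if s ∈ A then 1 else 0) - p) ?_ ?_
    · simp only [sub_mul, ite_mul, one_mul, zero_mul, Finset.sum_sub_distrib,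
        ← Finset.sum_filter, Finset.filter_mem_eq_inter, Finset.univ_inter,
        ← Finset.mul_sum, hμA1, mul_one] at this
      linarith
    · simp only [sub_mul, ite_mul, one_mul, zero_mul, Finset.sum_sub_distrib,
        ← Finset.sum_filter, Finset.filter_mem_eq_inter, Finset.univ_inter,
        ← Finset.mul_sum, hμ1, mul_one]
      simp [← hp]
    · have : ∑ s ∈ A, ((if s ∈ A then (1:ℝ) else 0) - p) * μ s
          = (1 - p) * p := by
        rw [hp, Finset.mul_sum]
        exact Finset.sum_congr rfl fun s hs => by rw [if_pos hs]
      rw [this]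
      nlinarith
  -- a state in A with positive prior
  have ht0 : ∃ t ∈ A, 0 < μ t := by
    by_contra h
    push_neg at h
    have : p ≤ 0 := Finset.sum_nonpos fun s hs => h s hs
    linarith
  obtain ⟨t0, ht0A, ht0pos⟩ := ht0
  set c : ℝ := μA t0 / μ t0 with hcdef
  have hcA : ∀ s ∈ A, μA s = c * μ s := by
    intro s hs
    rcases eq_or_lt_of_le (hμ0 s) with h | h
    · rw [← h, hzero s h.symm, mul_zero]
    · have := hratio s t0 (by simp [hs, ht0A])
      rw [hcdef]
      field_simp
      linarith [this]
  have hsumA : ∑ s ∈ A, μA s = c * p := by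
    rw [hp, Finset.mul_sum]
    exact Finset.sum_congr rfl fun s hs => hcA s hs
  have hsplit : ∑ s ∈ A, μA s + ∑ s ∈ Finset.univ \ A, μA s = 1 := by
    rw [add_comm, Finset.sum_sdiff (Finset.subset_univ A), hμA1]
  have hsplitμ : ∑ s ∈ Finset.univ \ A, μ s = 1 - p := by
    have := Finset.sum_sdiff (s₁ := A) (s₂ := Finset.univ) (f := μ) (Finset.subset_univ A)
    rw [hμ1] at this
    linarith [this]
  rcases eq_or_lt_of_le hp1 with hpeq | hplt
  · -- p = 1 : prior is concentrated on A, posterior equals prior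
    have hout : ∀ s ∈ Finset.univ \ A, μ s = 0 := by
      intro s hs
      have h0 : ∑ t ∈ Finset.univ \ A, μ t = 0 := by rw [hsplitμ, ← hpeq]; ring
      exact (Finset.sum_eq_zero_iff_of_nonneg (fun t _ => hμ0 t)).mp h0 s hs
    have houtA : ∀ s ∈ Finset.univ \ A, μA s = 0 := fun s hs => hzero s (hout s hs)
    have hc1 : c = 1 := by
      have h0 : ∑ s ∈ Finset.univ \ A, μA s = 0 := Finset.sum_eq_zero houtA
      rw [hsumA, h0] at hsplit
      rw [hpeq] at hsplit
      linarith
    refine ⟨1, ⟨le_of_lt one_pos, le_refl 1⟩, fun s => ?_⟩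
    simp only [sub_self, zero_mul, add_zero, one_mul]
    by_cases hs : s ∈ A
    · rw [hcA s hs, hc1, one_mul]
    · rw [hzero s (hout s (by simp [hs])), hout s (by simp [hs])]
  · -- p < 1
    have ht1 : ∃ t ∈ Finset.univ \ A, 0 < μ t := by
      by_contra h
      push_neg at h
      have : ∑ s ∈ Finset.univ \ A, μ s ≤ 0 := Finset.sum_nonpos h
      linarith [hsplitμ]
    obtain ⟨t1, ht1c, ht1pos⟩ := ht1
    have ht1nA : t1 ∉ A := (Finset.mem_sdiff.mp ht1c).2
    set δ : ℝ := μA t1 / μ t1 with hδdef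
    have hδ0 : 0 ≤ δ := div_nonneg (hμA0 t1) (le_of_lt ht1pos)
    have hδc : ∀ s ∈ Finset.univ \ A, μA s = δ * μ s := by
      intro s hs
      have hsnA : s ∉ A := (Finset.mem_sdiff.mp hs).2
      rcases eq_or_lt_of_le (hμ0 s) with h | h
      · rw [← h, hzero s h.symm, mul_zero]
      · have := hratio s t1 (by simp [hsnA, ht1nA])
        rw [hδdef]
        field_simp
        linarith [this]
    have hsumC : ∑ s ∈ Finset.univ \ A, μA s = δ * (1 - p) := by
      rw [← hsplitμ, Finset.mul_sum]
      exact Finset.sum_congr rfl fun s hs => hδc s hs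
    have hnorm : c * p + δ * (1 - p) = 1 := by
      rw [← hsumA, ← hsumC]; exact hsplit
    have hcge : 1 ≤ c := by
      rw [hsumA] at hAbound
      nlinarith
    have hδ1 : δ ≤ 1 := by nlinarith
    refine ⟨δ, ⟨hδ0, hδ1⟩, fun s => ?_⟩
    by_cases hs : s ∈ A
    · rw [hcA s hs]
      simp only [bayes, if_pos hs, ← hp]
      have hceq : c = δ + (1 - δ) / p := by
        field_simp
        nlinarith
      rw [hceq]
      field_simp
    · rw [hδc s (by simp [hs])]
      simp [bayes, hs]
end

section
/- Let M be a nonempty set of beliefs on a nonempty finite set S, let u : X → ℝ, let ≿* be the unanimity preference represented by (u, M), and let A ⊆ S satisfy μ(A) > 0 for every μ ∈ M. Let ≿_A be any binary relation on acts, with asymmetric part ≻_A, and assume Dynamic Conservatism: for all acts f, g, (f ≿* g and fAg ≿* g) implies f ≿_A g, and (f ≻* g and fAg ≻* g) implies f ≻_A g, where ≻* is the asymmetric part of ≿*. Then for all consequences x, y ∈ X (viewed as constant acts): x ≿_A y if and only if u(x) ≥ u(y). (Lemma 1: conditional and unconditional preferences agree on constant acts.) -/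
open Finset

/-- Lemma 1: conditional and unconditional preferences agree on constant acts. -/
theorem stmt3 {S X : Type*} [Fintype S] [DecidableEq S] [Nonempty S]
    (M : Set (S → ℝ)) (hM : M.Nonempty)
    (hMb : ∀ μ ∈ M, (∀ s, 0 ≤ μ s) ∧ ∑ s, μ s = 1)
    (u : X → ℝ)
    (A : Finset S) (hA : ∀ μ ∈ M, 0 < ∑ s ∈ A, μ s)
    (R : (S → X) → (S → X) → Prop)
    (hDC : ∀ f g : S → X,
      (∀ μ ∈ M, ∑ s, u (f s) * μ s ≥ ∑ s, u (g s) * μ s) →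
      (∀ μ ∈ M, ∑ s, u (splice f g A s) * μ s ≥ ∑ s, u (g s) * μ s) →
      R f g)
    (hDCs : ∀ f g : S → X,
      ((∀ μ ∈ M, ∑ s, u (f s) * μ s ≥ ∑ s, u (g s) * μ s) ∧
        ¬ (∀ μ ∈ M, ∑ s, u (g s) * μ s ≥ ∑ s, u (f s) * μ s)) →
      ((∀ μ ∈ M, ∑ s, u (splice f g A s) * μ s ≥ ∑ s, u (g s) * μ s) ∧
        ¬ (∀ μ ∈ M, ∑ s, u (g s) * μ s ≥ ∑ s, u (splice f g A s) * μ s)) →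
      (R f g ∧ ¬ R g f)) :
    ∀ x y : X, R (fun _ => x) (fun _ => y) ↔ u x ≥ u y := by
  intro x y
  -- helper: sum of constant act
  have hconst : ∀ (c : X) (μ : S → ℝ), μ ∈ M → ∑ s, u c * μ s = u c := by
    intro c μ hμ
    rw [← Finset.mul_sum, (hMb μ hμ).2, mul_one]
  have hsplice : ∀ (a b : X) (μ : S → ℝ),
      ∑ s, u (splice (fun _ => a) (fun _ => b) A s) * μ s
        = (u a - u b) * (∑ s ∈ A, μ s) + u b * ∑ s, μ s := by
    intro a b μ
    have : ∀ s : S, u (splice (fun _ => a) (fun _ => b) A s) * μ s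
        = (if s ∈ A then (u a - u b) * μ s else 0) + u b * μ s := by
      intro s
      simp only [splice]
      split <;> ring
    rw [Finset.sum_congr rfl (fun s _ => this s), Finset.sum_add_distrib,
      Finset.sum_ite_mem, Finset.univ_inter, ← Finset.mul_sum, ← Finset.mul_sum]
  constructor
  · -- R x y → u x ≥ u y
    intro hR
    by_contra hlt
    push_neg at hlt
    have h := hDCs (fun _ => y) (fun _ => x) ?_ ?_
    · exact h.2 hR
    · obtain ⟨μ₀, hμ₀⟩ := hM
      constructor
      · intro μ hμ
        rw [hconst y μ hμ, hconst x μ hμ]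
        linarith
      · intro hall
        have := hall μ₀ hμ₀
        rw [hconst y μ₀ hμ₀, hconst x μ₀ hμ₀] at this
        linarith
    · obtain ⟨μ₀, hμ₀⟩ := hM
      constructor
      · intro μ hμ
        rw [hconst x μ hμ, hsplice y x μ, (hMb μ hμ).2, mul_one]
        have := (hA μ hμ).le
        nlinarith
      · intro hall
        have := hall μ₀ hμ₀
        rw [hconst x μ₀ hμ₀, hsplice y x μ₀, (hMb μ₀ hμ₀).2, mul_one] at this
        have h0 := hA μ₀ hμ₀
        nlinarith
  · -- u x ≥ u y → R x y
    intro hge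
    apply hDC
    · intro μ hμ
      rw [hconst x μ hμ, hconst y μ hμ]
      exact hge
    · intro μ hμ
      rw [hconst y μ hμ, hsplice x y μ, (hMb μ hμ).2, mul_one]
      have h1 : 0 ≤ ∑ s ∈ A, μ s := Finset.sum_nonneg fun s _ => (hMb μ hμ).1 s
      nlinarith
end

section
/- Let M be a nonempty set of beliefs on a nonempty finite set S, let u : X → ℝ, and let ≿* be the unanimity preference represented by (u, M). Then for every event A ⊆ S and all acts f, g: fAg ≿* g if and only if fAh ≿* gAh for every act h. (Lemma 2.) -/
open Finset

/-- Lemma 2: fAg ≿* g iff fAh ≿* gAh for every act h. -/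
theorem stmt4 {S X : Type*} [Fintype S] [DecidableEq S] [Nonempty S]
    (M : Set (S → ℝ)) (hM : M.Nonempty)
    (hMb : ∀ μ ∈ M, (∀ s, 0 ≤ μ s) ∧ ∑ s, μ s = 1)
    (u : X → ℝ)
    (A : Finset S) (f g : S → X) :
    (∀ μ ∈ M, ∑ s, u (splice f g A s) * μ s ≥ ∑ s, u (g s) * μ s) ↔
    (∀ h : S → X, ∀ μ ∈ M,
      ∑ s, u (splice f h A s) * μ s ≥ ∑ s, u (splice g h A s) * μ s) := by
  have key : ∀ (h : S → X) (μ : S → ℝ),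
      ∑ s, u (splice f h A s) * μ s - ∑ s, u (splice g h A s) * μ s
        = ∑ s, (if s ∈ A then (u (f s) - u (g s)) * μ s else 0) := by
    intro h μ
    rw [← Finset.sum_sub_distrib]
    refine Finset.sum_congr rfl fun s _ => ?_
    simp only [splice]
    split <;> ring
  have key2 : ∀ (μ : S → ℝ),
      ∑ s, u (splice f g A s) * μ s - ∑ s, u (g s) * μ s
        = ∑ s, (if s ∈ A then (u (f s) - u (g s)) * μ s else 0) := by
    intro μ
    rw [← Finset.sum_sub_distrib]
    refine Finset.sum_congr rfl fun s _ => ?_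
    simp only [splice]
    split <;> ring
  constructor
  · intro H h μ hμ
    have := H μ hμ
    have h1 := key2 μ
    have h2 := key h μ
    linarith [h2 ▸ h1 ▸ (sub_nonneg.mpr this)]
  · intro H μ hμ
    have := H g μ hμ
    have h1 := key2 μ
    have h2 := key g μ
    linarith [h1 ▸ h2 ▸ (sub_nonneg.mpr this)]
end

section
/- Let M be a nonempty set of beliefs on a nonempty finite set S, let u : X → ℝ, let ≿* be the unanimity preference represented by (u, M), and let A ⊆ S satisfy μ(A) > 0 for every μ ∈ M. Define f ⊵_A g iff fAh ≿* gAh for some act h. Then for all acts f, g: f ⊵_A g if and only if ∑_{s∈S} u(f(s))π(s) ≥ ∑_{s∈S} u(g(s))π(s) for every π ∈ B(M,A) = {B(μ,A) : μ ∈ M}. (Lemma 3: the derived conditional relation admits the multi-prior expected utility representation (u, B(M,A)).) -/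
open Finset

lemma sum_splice_eq {S X : Type*} [Fintype S] [DecidableEq S] (u : X → ℝ)
    (f h : S → X) (A : Finset S) (μ : S → ℝ) :
    ∑ s, u (splice f h A s) * μ s
      = ∑ s ∈ A, u (f s) * μ s + ∑ s ∈ Aᶜ, u (h s) * μ s := by
  rw [← Finset.sum_add_sum_compl A]
  congr 1
  · exact Finset.sum_congr rfl fun s hs => by simp [splice, hs]
  · exact Finset.sum_congr rfl fun s hs => by
      simp only [Finset.mem_compl] at hs; simp [splice, hs]

lemma sum_bayes_eq {S X : Type*} [Fintype S] [DecidableEq S] (u : X → ℝ)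
    (f : S → X) (A : Finset S) (μ : S → ℝ) :
    ∑ s, u (f s) * bayes μ A s = (∑ s ∈ A, u (f s) * μ s) / (∑ t ∈ A, μ t) := by
  rw [Finset.sum_div]
  rw [← Finset.sum_subset (Finset.subset_univ A)
    (fun s _ hs => by simp [bayes, hs])]
  exact Finset.sum_congr rfl fun s hs => by simp [bayes, hs]; ring

/-- Lemma 3: the derived conditional relation admits the multi-prior expected
utility representation (u, B(M,A)). -/
theorem stmt5 {S X : Type*} [Fintype S] [DecidableEq S] [Nonempty S]
    (M : Set (S → ℝ)) (hM : M.Nonempty)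
    (hMb : ∀ μ ∈ M, (∀ s, 0 ≤ μ s) ∧ ∑ s, μ s = 1)
    (u : X → ℝ)
    (A : Finset S) (hA : ∀ μ ∈ M, 0 < ∑ s ∈ A, μ s)
    (f g : S → X) :
    (∃ h : S → X, ∀ μ ∈ M,
      ∑ s, u (splice f h A s) * μ s ≥ ∑ s, u (splice g h A s) * μ s) ↔
    (∀ π ∈ (fun μ => bayes μ A) '' M,
      ∑ s, u (f s) * π s ≥ ∑ s, u (g s) * π s) := by
  constructor
  · rintro ⟨h, hh⟩ π ⟨μ, hμ, rfl⟩
    have := hh μ hμ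
    rw [sum_splice_eq, sum_splice_eq] at this
    rw [sum_bayes_eq, sum_bayes_eq]
    exact div_le_div_of_nonneg_right (by linarith) (le_of_lt (hA μ hμ))
  · intro hπ
    refine ⟨f, fun μ hμ => ?_⟩
    have := hπ (bayes μ A) ⟨μ, hμ, rfl⟩
    rw [sum_bayes_eq, sum_bayes_eq] at this
    rw [sum_splice_eq, sum_splice_eq]
    have hc := hA μ hμ
    have : ∑ s ∈ A, u (g s) * μ s ≤ ∑ s ∈ A, u (f s) * μ s :=
      (div_le_div_iff_of_pos_right hc).mp this
    linarith
end

section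
/- Let μ be a belief on a nonempty finite set S, let u : X → ℝ, let δ ∈ [0,1], and for each event E with μ(E) > 0 define μ_E(s) = δ·μ(s) + (1−δ)·B(μ,E)(s). Then for all events A, B, C with μ(A) > 0, μ(B) > 0, μ(C) > 0 and C ∩ (A ∪ B) = ∅, every act f, and every consequence y: ∑_{s∈S} u((fCy)(s))·μ_A(s) = ∑_{s∈S} u((fCy)(s))·μ_B(s). In particular, for every z ∈ X, ∑_{s∈S} u((fCy)(s))·μ_A(s) ≥ u(z) if and only if ∑_{s∈S} u((fCy)(s))·μ_B(s) ≥ u(z). (Direction (ii)⇒(i) of Proposition 1: a constant degree of conservatism implies Weak Consequentialism.) -/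
open Finset

lemma bayes_sum_aux {S X : Type*} [Fintype S] [DecidableEq S]
    (μ : S → ℝ) (u : X → ℝ) (A C : Finset S)
    (hA : 0 < ∑ s ∈ A, μ s) (hAC : ∀ s ∈ A, s ∉ C)
    (f : S → X) (y : X) :
    ∑ s, u (splice f (fun _ => y) C s) * bayes μ A s = u y := by
  rw [← Finset.sum_subset (Finset.subset_univ A)]
  · have : ∀ s ∈ A, u (splice f (fun _ => y) C s) * bayes μ A s
        = u y * (μ s / ∑ t ∈ A, μ t) := by
      intro s hs
      simp [splice, bayes, hs, hAC s hs]
    rw [Finset.sum_congr rfl this, ← Finset.mul_sum, ← Finset.sum_div]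
    field_simp
  · intro s _ hs
    simp [bayes, hs]

/-- Direction (ii) ⇒ (i) of Proposition 1: a constant degree of conservatism
implies Weak Consequentialism. -/
theorem stmt7 {S X : Type*} [Fintype S] [DecidableEq S] [Nonempty S]
    (μ : S → ℝ) (hμ0 : ∀ s, 0 ≤ μ s) (hμ1 : ∑ s, μ s = 1)
    (u : X → ℝ)
    (δ : ℝ) (hδ : δ ∈ Set.Icc (0:ℝ) 1)
    (A B C : Finset S)
    (hA : 0 < ∑ s ∈ A, μ s) (hB : 0 < ∑ s ∈ B, μ s) (hC : 0 < ∑ s ∈ C, μ s)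
    (hdisj : C ∩ (A ∪ B) = ∅)
    (f : S → X) (y : X) :
    (∑ s, u (splice f (fun _ => y) C s) * (δ * μ s + (1 - δ) * bayes μ A s) =
     ∑ s, u (splice f (fun _ => y) C s) * (δ * μ s + (1 - δ) * bayes μ B s)) ∧
    (∀ z : X,
      (∑ s, u (splice f (fun _ => y) C s) * (δ * μ s + (1 - δ) * bayes μ A s) ≥ u z) ↔
      (∑ s, u (splice f (fun _ => y) C s) * (δ * μ s + (1 - δ) * bayes μ B s) ≥ u z)) := by
  have hAC : ∀ s ∈ A, s ∉ C := by
    intro s hs hsC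
    have : s ∈ C ∩ (A ∪ B) := Finset.mem_inter.2 ⟨hsC, Finset.mem_union_left _ hs⟩
    simp [hdisj] at this
  have hBC : ∀ s ∈ B, s ∉ C := by
    intro s hs hsC
    have : s ∈ C ∩ (A ∪ B) := Finset.mem_inter.2 ⟨hsC, Finset.mem_union_right _ hs⟩
    simp [hdisj] at this
  have key : ∀ (D : Finset S), 0 < (∑ s ∈ D, μ s) → (∀ s ∈ D, s ∉ C) →
      ∑ s, u (splice f (fun _ => y) C s) * (δ * μ s + (1 - δ) * bayes μ D s)
      = δ * (∑ s, u (splice f (fun _ => y) C s) * μ s) + (1 - δ) * u y := by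
    intro D hD hDC
    have h1 := bayes_sum_aux μ u D C hD hDC f y
    rw [← h1]
    rw [Finset.mul_sum, Finset.mul_sum, ← Finset.sum_add_distrib]
    apply Finset.sum_congr rfl
    intro s _
    ring
  have heq := (key A hA hAC).trans (key B hB hBC).symm
  exact ⟨heq, fun z => by rw [heq]⟩
end

section
/- Let S be a finite set with at least 3 elements, let μ be a belief on S with full support (μ(s) > 0 for every s ∈ S), let u : X → ℝ with [−1,1] contained in the range of u, let δ assign to each nonempty event A ⊆ S a value δ(A) ∈ [0,1], and set μ_A = δ(A)·μ + (1−δ(A))·B(μ,A). Assume Weak Consequentialism: for all nonempty events A, B, C with C ∩ (A ∪ B) = ∅, every act f, and all y, z ∈ X, ∑_{s∈S} u((fCy)(s))μ_A(s) ≥ u(z) if and only if ∑_{s∈S} u((fCy)(s))μ_B(s) ≥ u(z). Then there is a single δ* ∈ [0,1] such that δ(A) = δ* for every event A with ∅ ≠ A ≠ S. (Direction (i)⇒(ii) of Proposition 1.) -/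
open Finset

/-- Direction (i) ⇒ (ii) of Proposition 1: Weak Consequentialism implies a
constant degree of conservatism. -/
theorem stmt9 {S X : Type*} [Fintype S] [DecidableEq S]
    (hcard : 3 ≤ Fintype.card S)
    (μ : S → ℝ) (hμ0 : ∀ s, 0 < μ s) (hμ1 : ∑ s, μ s = 1)
    (u : X → ℝ) (hu : Set.Icc (-1:ℝ) 1 ⊆ Set.range u)
    (δ : Finset S → ℝ) (hδ : ∀ A : Finset S, A.Nonempty → δ A ∈ Set.Icc (0:ℝ) 1)
    (hWC : ∀ A B C : Finset S, A.Nonempty → B.Nonempty → C.Nonempty →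
      C ∩ (A ∪ B) = ∅ →
      ∀ f : S → X, ∀ y z : X,
        ((∑ s, u (splice f (fun _ => y) C s) *
            (δ A * μ s + (1 - δ A) * bayes μ A s) ≥ u z) ↔
         (∑ s, u (splice f (fun _ => y) C s) *
            (δ B * μ s + (1 - δ B) * bayes μ B s) ≥ u z))) :
    ∃ d ∈ Set.Icc (0:ℝ) 1,
      ∀ A : Finset S, A.Nonempty → A ≠ Finset.univ → δ A = d := by
  -- consequences with utility 1 and 0
  obtain ⟨x₁, hx₁⟩ := hu (⟨by norm_num, le_refl 1⟩ : (1:ℝ) ∈ Set.Icc (-1:ℝ) 1)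
  obtain ⟨x₀, hx₀⟩ := hu (⟨by norm_num, by norm_num⟩ : (0:ℝ) ∈ Set.Icc (-1:ℝ) 1)
  -- each μ c is at most 1
  have hμle : ∀ c : S, μ c ≤ 1 := by
    intro c
    calc μ c ≤ ∑ s, μ s := Finset.single_le_sum (fun s _ => (hμ0 s).le) (mem_univ c)
    _ = 1 := hμ1
  -- the key sum computation
  have hsum : ∀ (D : Finset S) (c : S), c ∉ D →
      ∑ s, u (splice (fun _ => x₁) (fun _ => x₀) {c} s) *
        (δ D * μ s + (1 - δ D) * bayes μ D s) = δ D * μ c := by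
    intro D c hc
    have h1 : ∀ s : S, u (splice (fun _ => x₁) (fun _ => x₀) ({c} : Finset S) s) *
        (δ D * μ s + (1 - δ D) * bayes μ D s)
        = if s = c then δ D * μ s + (1 - δ D) * bayes μ D s else 0 := by
      intro s
      by_cases h : s = c <;> simp [splice, h, hx₁, hx₀]
    rw [Finset.sum_congr rfl (fun s _ => h1 s), Finset.sum_ite_eq' univ c]
    simp [bayes, hc]
  -- key lemma: δ A = δ B when A ∪ B is not everything
  have key : ∀ A B : Finset S, A.Nonempty → B.Nonempty → A ∪ B ≠ univ → δ A = δ B := by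
    intro A B hA hB hne
    obtain ⟨c, hc⟩ : ∃ c, c ∉ A ∪ B := by
      by_contra h
      push_neg at h
      exact hne (Finset.eq_univ_iff_forall.mpr h)
    have hcA : c ∉ A := fun h => hc (Finset.mem_union_left _ h)
    have hcB : c ∉ B := fun h => hc (Finset.mem_union_right _ h)
    have hdisj : ({c} : Finset S) ∩ (A ∪ B) = ∅ :=
      Finset.singleton_inter_of_notMem hc
    have hiff : ∀ z : X, (δ A * μ c ≥ u z) ↔ (δ B * μ c ≥ u z) := by
      intro z
      have := hWC A B {c} hA hB ⟨c, Finset.mem_singleton_self c⟩ hdisj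
        (fun _ => x₁) x₀ z
      rwa [hsum A c hcA, hsum B c hcB] at this
    have hbounds : ∀ D : Finset S, D.Nonempty → δ D * μ c ∈ Set.Icc (-1:ℝ) 1 := by
      intro D hD
      obtain ⟨h0, h1⟩ := hδ D hD
      constructor
      · nlinarith [(hμ0 c).le, hμle c]
      · nlinarith [(hμ0 c).le, hμle c]
    obtain ⟨za, hza⟩ := hu (hbounds A hA)
    obtain ⟨zb, hzb⟩ := hu (hbounds B hB)
    have h1 : δ A * μ c ≥ δ B * μ c := by
      have := (hiff zb).mpr
      rw [hzb] at this
      exact this (le_refl _)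
    have h2 : δ B * μ c ≥ δ A * μ c := by
      have := (hiff za).mp
      rw [hza] at this
      exact this (le_refl _)
    have : δ A * μ c = δ B * μ c := le_antisymm h2 h1
    exact mul_right_cancel₀ (ne_of_gt (hμ0 c)) this
  -- pick a reference state
  have hpos : 0 < Fintype.card S := by omega
  obtain ⟨s₀⟩ := Fintype.card_pos_iff.mp hpos
  refine ⟨δ {s₀}, hδ {s₀} ⟨s₀, mem_singleton_self s₀⟩, ?_⟩
  intro A hA hAne
  obtain ⟨a, ha⟩ := hA
  have h1 : δ A = δ {a} := by
    apply key A {a} ⟨a, ha⟩ ⟨a, mem_singleton_self a⟩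
    rwa [Finset.union_eq_left.mpr (Finset.singleton_subset_iff.mpr ha)]
  have h2 : δ {a} = δ {s₀} := by
    apply key {a} {s₀} ⟨a, mem_singleton_self a⟩ ⟨s₀, mem_singleton_self s₀⟩
    intro h
    have hle : (({a} : Finset S) ∪ {s₀}).card ≤ 2 := by
      calc (({a} : Finset S) ∪ {s₀}).card ≤ ({a} : Finset S).card + ({s₀} : Finset S).card :=
        Finset.card_union_le _ _
      _ = 2 := by simp
    rw [h, Finset.card_univ] at hle
    omega
  rw [h1, h2]
end

section
/- Let μ be a belief on a nonempty finite set S, let u : X → ℝ with [−1,1] contained in the range of u, let A, B, C be events with μ(A) > 0, μ(B) > 0, μ(C) > 0 and C ∩ (A ∪ B) = ∅, let δ_A, δ_B ∈ [0,1], and set μ_A = δ_A·μ + (1−δ_A)·B(μ,A) and μ_B = δ_B·μ + (1−δ_B)·B(μ,B). Then for all x, y ∈ X with −1 ≤ u(y) < u(x) ≤ 1, the following are equivalent: (i) for every z ∈ X, ∑_{s∈S} u((xCy)(s))μ_B(s) ≥ u(z) implies ∑_{s∈S} u((xCy)(s))μ_A(s) ≥ u(z); (ii) δ_A ≥ δ_B.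 (The agent is weakly more willing to bet on the disjoint event C after A than after B exactly when her conservatism weight at A is at least her weight at B; this is the content of Proposition 2.) -/
open Finset

lemma sum_splice_mul {S X : Type*} [Fintype S] [DecidableEq S]
    (u : X → ℝ) (x y : X) (C : Finset S) (ν : S → ℝ) :
    ∑ s, u (splice (fun _ => x) (fun _ => y) C s) * ν s
      = u x * ∑ s ∈ C, ν s + u y * (∑ s, ν s - ∑ s ∈ C, ν s) := by
  have h : ∀ s : S, u (splice (fun _ => x) (fun _ => y) C s) * ν s
      = (if s ∈ C then u x * ν s else 0) + (u y * ν s - if s ∈ C then u y * ν s else 0) := by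
    intro s
    simp only [splice]
    by_cases hs : s ∈ C <;> simp [hs]
  rw [Finset.sum_congr rfl fun s _ => h s, Finset.sum_add_distrib, Finset.sum_sub_distrib]
  rw [Finset.sum_ite_mem, Finset.sum_ite_mem, Finset.univ_inter,
    ← Finset.mul_sum, ← Finset.mul_sum, ← Finset.mul_sum, mul_sub]

lemma bayes_sum_one {S : Type*} [Fintype S] [DecidableEq S]
    (μ : S → ℝ) (A : Finset S) (hA : 0 < ∑ s ∈ A, μ s) :
    ∑ s, bayes μ A s = 1 := by
  simp only [bayes]
  rw [Finset.sum_ite_mem, Finset.univ_inter, ← Finset.sum_div, div_self hA.ne']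

lemma bayes_sum_zero {S : Type*} [Fintype S] [DecidableEq S]
    (μ : S → ℝ) (A C : Finset S) (h : ∀ s ∈ C, s ∉ A) :
    ∑ s ∈ C, bayes μ A s = 0 := by
  apply Finset.sum_eq_zero
  intro s hs
  simp [bayes, h s hs]

/-- Proposition 2 (content): the agent is weakly more willing to bet on the
disjoint event C after A than after B exactly when δ_A ≥ δ_B. -/
theorem stmt11 {S X : Type*} [Fintype S] [DecidableEq S] [Nonempty S]
    (μ : S → ℝ) (hμ0 : ∀ s, 0 ≤ μ s) (hμ1 : ∑ s, μ s = 1)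
    (u : X → ℝ) (hu : Set.Icc (-1:ℝ) 1 ⊆ Set.range u)
    (A B C : Finset S)
    (hA : 0 < ∑ s ∈ A, μ s) (hB : 0 < ∑ s ∈ B, μ s) (hC : 0 < ∑ s ∈ C, μ s)
    (hdisj : C ∩ (A ∪ B) = ∅)
    (δA δB : ℝ) (hδA : δA ∈ Set.Icc (0:ℝ) 1) (hδB : δB ∈ Set.Icc (0:ℝ) 1) :
    ∀ x y : X, -1 ≤ u y → u y < u x → u x ≤ 1 →
      ((∀ z : X,
          ∑ s, u (splice (fun _ => x) (fun _ => y) C s) *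
            (δB * μ s + (1 - δB) * bayes μ B s) ≥ u z →
          ∑ s, u (splice (fun _ => x) (fun _ => y) C s) *
            (δA * μ s + (1 - δA) * bayes μ A s) ≥ u z) ↔
        δA ≥ δB) := by
  intro x y hy hyx hx
  -- disjointness facts
  have hCA : ∀ s ∈ C, s ∉ A := by
    intro s hs hsA
    have : s ∈ C ∩ (A ∪ B) := Finset.mem_inter.2 ⟨hs, Finset.mem_union_left _ hsA⟩
    simp [hdisj] at this
  have hCB : ∀ s ∈ C, s ∉ B := by
    intro s hs hsB
    have : s ∈ C ∩ (A ∪ B) := Finset.mem_inter.2 ⟨hs, Finset.mem_union_right _ hsB⟩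
    simp [hdisj] at this
  set mC : ℝ := ∑ s ∈ C, μ s with hmC
  have hmC1 : mC ≤ 1 := by
    rw [← hμ1]
    exact Finset.sum_le_sum_of_subset_of_nonneg (Finset.subset_univ C) (fun s _ _ => hμ0 s)
  -- the two expected values
  have key : ∀ (δ : ℝ) (D : Finset S), 0 < ∑ s ∈ D, μ s → (∀ s ∈ C, s ∉ D) →
      ∑ s, u (splice (fun _ => x) (fun _ => y) C s) * (δ * μ s + (1 - δ) * bayes μ D s)
        = u x * (δ * mC) + u y * (1 - δ * mC) := by
    intro δ D hD hCD
    rw [sum_splice_mul]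
    have h1 : ∑ s ∈ C, (δ * μ s + (1 - δ) * bayes μ D s) = δ * mC := by
      rw [Finset.sum_add_distrib, ← Finset.mul_sum, ← Finset.mul_sum,
        bayes_sum_zero μ D C hCD, hmC]
      ring
    have h2 : ∑ s, (δ * μ s + (1 - δ) * bayes μ D s) = 1 := by
      rw [Finset.sum_add_distrib, ← Finset.mul_sum, ← Finset.mul_sum,
        bayes_sum_one μ D hD, hμ1]
      ring
    rw [h1, h2]
  have keyA := key δA A hA hCA
  have keyB := key δB B hB hCB
  rw [keyA, keyB]
  have harith : ∀ δ δ' : ℝ,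
      (u x * (δ * mC) + u y * (1 - δ * mC) ≥ u x * (δ' * mC) + u y * (1 - δ' * mC)) ↔ δ ≥ δ' := by
    intro δ δ'
    have hpos : 0 < (u x - u y) * mC := mul_pos (sub_pos.2 hyx) hC
    constructor
    · intro h
      by_contra hlt
      push_neg at hlt
      nlinarith [mul_pos hpos (sub_pos.2 hlt)]
    · intro h
      nlinarith [mul_nonneg hpos.le (sub_nonneg.2 h)]
  constructor
  · intro h
    -- pick z with u z = value under B
    have hvB : u x * (δB * mC) + u y * (1 - δB * mC) ∈ Set.Icc (-1:ℝ) 1 := by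
      have h0 : 0 ≤ δB * mC := mul_nonneg hδB.1 hC.le
      have h1 : δB * mC ≤ 1 := by
        calc δB * mC ≤ 1 * 1 := by
              apply mul_le_mul hδB.2 hmC1 hC.le zero_le_one
          _ = 1 := one_mul 1
      constructor <;> nlinarith
    obtain ⟨z, hz⟩ := hu hvB
    have := h z hz.le
    rw [hz] at this
    exact (harith δA δB).1 this
  · intro h z hz
    exact le_trans hz ((harith δA δB).2 h)
end

section
/- Let μ₁, μ₂ be beliefs on a nonempty finite set S, let u : X → ℝ with [−1,1] contained in the range of u, let A ⊆ S satisfy 0 < μ₁(A) < 1 and 0 < μ₂(A) < 1, let δ₁, δ₂ ∈ [0,1], and set μ¹_A = δ₁·μ₁ + (1−δ₁)·B(μ₁,A) and μ²_A = δ₂·μ₂ + (1−δ₂)·B(μ₂,A). Then the following are equivalent: (i) for all x, y₁, y₂ ∈ X with u(x), u(y₁), u(y₂) ∈ [−1,1], u(x) > u(y₁), u(x) > u(y₂), and such that for every z ∈ X, ∑_{s∈S} u((xAy₁)(s))μ₁(s) ≥ u(z) iff ∑_{s∈S} u((xAy₂)(s))μ₂(s) ≥ u(z), it holds that for every z ∈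 X, ∑_{s∈S} u((xAy₁)(s))μ¹_A(s) ≥ u(z) implies ∑_{s∈S} u((xAy₂)(s))μ²_A(s) ≥ u(z); (ii) δ₁ ≥ δ₂. (Proposition 3: agent 1 is more conservative than agent 2 at A if and only if δ₁(A) ≥ δ₂(A).) -/
open Finset

lemma sum_splice {S X : Type*} [Fintype S] [DecidableEq S] (u : X → ℝ) (x y : X)
    (A : Finset S) (ν : S → ℝ) :
    ∑ s, u (splice (fun _ => x) (fun _ => y) A s) * ν s
      = u x * ∑ s ∈ A, ν s + u y * ∑ s ∈ Aᶜ, ν s := by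
  rw [← Finset.sum_add_sum_compl A, Finset.mul_sum, Finset.mul_sum]
  congr 1
  · exact Finset.sum_congr rfl fun s hs => by simp [splice, hs]
  · exact Finset.sum_congr rfl fun s hs => by simp [splice, Finset.mem_compl.mp hs]

lemma bayes_sum_A {S : Type*} [Fintype S] [DecidableEq S] (μ : S → ℝ) (A : Finset S)
    (h : 0 < ∑ s ∈ A, μ s) : ∑ s ∈ A, bayes μ A s = 1 := by
  have : ∑ s ∈ A, bayes μ A s = (∑ s ∈ A, μ s) / (∑ s ∈ A, μ s) := by
    rw [Finset.sum_div]
    exact Finset.sum_congr rfl fun s hs => by simp [bayes, hs]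
  rw [this, div_self h.ne']

lemma bayes_sum_compl {S : Type*} [Fintype S] [DecidableEq S] (μ : S → ℝ)
    (A : Finset S) : ∑ s ∈ Aᶜ, bayes μ A s = 0 :=
  Finset.sum_eq_zero fun s hs => by simp [bayes, Finset.mem_compl.mp hs]

set_option maxHeartbeats 1000000 in
/-- Proposition 3: agent 1 is more conservative than agent 2 at A if and only if
δ₁(A) ≥ δ₂(A). -/
theorem stmt12 {S X : Type*} [Fintype S] [DecidableEq S] [Nonempty S]
    (μ₁ μ₂ : S → ℝ)
    (hμ₁0 : ∀ s, 0 ≤ μ₁ s) (hμ₁1 : ∑ s, μ₁ s = 1)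
    (hμ₂0 : ∀ s, 0 ≤ μ₂ s) (hμ₂1 : ∑ s, μ₂ s = 1)
    (u : X → ℝ) (hu : Set.Icc (-1:ℝ) 1 ⊆ Set.range u)
    (A : Finset S)
    (hA₁0 : 0 < ∑ s ∈ A, μ₁ s) (hA₁1 : ∑ s ∈ A, μ₁ s < 1)
    (hA₂0 : 0 < ∑ s ∈ A, μ₂ s) (hA₂1 : ∑ s ∈ A, μ₂ s < 1)
    (δ₁ δ₂ : ℝ) (hδ₁ : δ₁ ∈ Set.Icc (0:ℝ) 1) (hδ₂ : δ₂ ∈ Set.Icc (0:ℝ) 1) :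
    (∀ x y₁ y₂ : X,
      u x ∈ Set.Icc (-1:ℝ) 1 → u y₁ ∈ Set.Icc (-1:ℝ) 1 → u y₂ ∈ Set.Icc (-1:ℝ) 1 →
      u y₁ < u x → u y₂ < u x →
      (∀ z : X,
        (∑ s, u (splice (fun _ => x) (fun _ => y₁) A s) * μ₁ s ≥ u z) ↔
        (∑ s, u (splice (fun _ => x) (fun _ => y₂) A s) * μ₂ s ≥ u z)) →
      (∀ z : X,
        ∑ s, u (splice (fun _ => x) (fun _ => y₁) A s) *
          (δ₁ * μ₁ s + (1 - δ₁) * bayes μ₁ A s) ≥ u z →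
        ∑ s, u (splice (fun _ => x) (fun _ => y₂) A s) *
          (δ₂ * μ₂ s + (1 - δ₂) * bayes μ₂ A s) ≥ u z)) ↔
    δ₁ ≥ δ₂ := by
  set p := ∑ s ∈ A, μ₁ s with hp
  set q := ∑ s ∈ A, μ₂ s with hq
  have hpc : ∑ s ∈ Aᶜ, μ₁ s = 1 - p := by
    have := Finset.sum_add_sum_compl A μ₁; rw [hμ₁1] at this; linarith
  have hqc : ∑ s ∈ Aᶜ, μ₂ s = 1 - q := by
    have := Finset.sum_add_sum_compl A μ₂; rw [hμ₂1] at this; linarith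
  -- expected values of spliced acts
  have E₁ : ∀ x y : X, ∑ s, u (splice (fun _ => x) (fun _ => y) A s) * μ₁ s
      = u x * p + u y * (1 - p) := by
    intro x y; rw [sum_splice, hpc]
  have E₂ : ∀ x y : X, ∑ s, u (splice (fun _ => x) (fun _ => y) A s) * μ₂ s
      = u x * q + u y * (1 - q) := by
    intro x y; rw [sum_splice, hqc]
  have VA₁ : ∑ s ∈ A, (δ₁ * μ₁ s + (1 - δ₁) * bayes μ₁ A s) = δ₁ * p + (1 - δ₁) := by
    rw [Finset.sum_add_distrib, ← Finset.mul_sum, ← Finset.mul_sum,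
      bayes_sum_A μ₁ A hA₁0, mul_one]
  have VAc₁ : ∑ s ∈ Aᶜ, (δ₁ * μ₁ s + (1 - δ₁) * bayes μ₁ A s) = δ₁ * (1 - p) := by
    rw [Finset.sum_add_distrib, ← Finset.mul_sum, ← Finset.mul_sum,
      bayes_sum_compl, hpc, mul_zero, add_zero]
  have VA₂ : ∑ s ∈ A, (δ₂ * μ₂ s + (1 - δ₂) * bayes μ₂ A s) = δ₂ * q + (1 - δ₂) := by
    rw [Finset.sum_add_distrib, ← Finset.mul_sum, ← Finset.mul_sum,
      bayes_sum_A μ₂ A hA₂0, mul_one]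
  have VAc₂ : ∑ s ∈ Aᶜ, (δ₂ * μ₂ s + (1 - δ₂) * bayes μ₂ A s) = δ₂ * (1 - q) := by
    rw [Finset.sum_add_distrib, ← Finset.mul_sum, ← Finset.mul_sum,
      bayes_sum_compl, hqc, mul_zero, add_zero]
  have V₁ : ∀ x y : X, ∑ s, u (splice (fun _ => x) (fun _ => y) A s) *
      (δ₁ * μ₁ s + (1 - δ₁) * bayes μ₁ A s)
      = u x - δ₁ * (1 - p) * (u x - u y) := by
    intro x y; rw [sum_splice, VA₁, VAc₁]; ring
  have V₂ : ∀ x y : X, ∑ s, u (splice (fun _ => x) (fun _ => y) A s) *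
      (δ₂ * μ₂ s + (1 - δ₂) * bayes μ₂ A s)
      = u x - δ₂ * (1 - q) * (u x - u y) := by
    intro x y; rw [sum_splice, VA₂, VAc₂]; ring
  obtain ⟨hδ₁0, hδ₁1⟩ := hδ₁
  obtain ⟨hδ₂0, hδ₂1⟩ := hδ₂
  constructor
  · -- (i) → δ₁ ≥ δ₂
    intro h
    set t : ℝ := min (1 - p) (1 - q) with ht
    have ht0 : 0 < t := lt_min (by linarith) (by linarith)
    have htp : t ≤ 1 - p := min_le_left _ _
    have htq : t ≤ 1 - q := min_le_right _ _
    have hp1 : 0 < 1 - p := by linarith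
    have hq1 : 0 < 1 - q := by linarith
    obtain ⟨x, hx⟩ := hu (Set.mem_Icc.mpr ⟨by norm_num, le_refl 1⟩)
    have hy1v : (1 - t / (1 - p)) ∈ Set.Icc (-1:ℝ) 1 := by
      constructor
      · have : t / (1 - p) ≤ 1 := (div_le_one hp1).mpr htp
        linarith
      · have : 0 < t / (1 - p) := div_pos ht0 hp1
        linarith
    have hy2v : (1 - t / (1 - q)) ∈ Set.Icc (-1:ℝ) 1 := by
      constructor
      · have : t / (1 - q) ≤ 1 := (div_le_one hq1).mpr htq
        linarith
      · have : 0 < t / (1 - q) := div_pos ht0 hq1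
        linarith
    obtain ⟨y₁, hy₁⟩ := hu hy1v
    obtain ⟨y₂, hy₂⟩ := hu hy2v
    have hd1 : u x - u y₁ = t / (1 - p) := by rw [hx, hy₁]; ring
    have hd2 : u x - u y₂ = t / (1 - q) := by rw [hx, hy₂]; ring
    have hlt1 : u y₁ < u x := by
      have : 0 < t / (1 - p) := div_pos ht0 hp1
      linarith [hd1]
    have hlt2 : u y₂ < u x := by
      have : 0 < t / (1 - q) := div_pos ht0 hq1
      linarith [hd2]
    have heq1 : (1 - p) * (u x - u y₁) = t := by
      rw [hd1]; field_simp
    have heq2 : (1 - q) * (u x - u y₂) = t := by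
      rw [hd2]; field_simp
    have hiff : ∀ z : X,
        (∑ s, u (splice (fun _ => x) (fun _ => y₁) A s) * μ₁ s ≥ u z) ↔
        (∑ s, u (splice (fun _ => x) (fun _ => y₂) A s) * μ₂ s ≥ u z) := by
      intro z
      rw [E₁, E₂]
      have e1 : u x * p + u y₁ * (1 - p) = u x - t := by
        have : u x * p + u y₁ * (1 - p) = u x - (1 - p) * (u x - u y₁) := by ring
        rw [this, heq1]
      have e2 : u x * q + u y₂ * (1 - q) = u x - t := by
        have : u x * q + u y₂ * (1 - q) = u x - (1 - q) * (u x - u y₂) := by ring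
        rw [this, heq2]
      rw [e1, e2]
    have key := h x y₁ y₂ (by rw [hx]; exact ⟨by norm_num, le_refl 1⟩)
      (by rw [hy₁]; exact hy1v) (by rw [hy₂]; exact hy2v) hlt1 hlt2 hiff
    -- apply at z with u z = V₁ = 1 - δ₁ * t
    have hV1mem : (1 - δ₁ * t) ∈ Set.Icc (-1:ℝ) 1 := by
      constructor
      · nlinarith [htp, htq]
      · nlinarith
    obtain ⟨z, hz⟩ := hu hV1mem
    have h1 : ∑ s, u (splice (fun _ => x) (fun _ => y₁) A s) *
        (δ₁ * μ₁ s + (1 - δ₁) * bayes μ₁ A s) ≥ u z := by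
      rw [V₁, hz, mul_assoc, heq1, hx]
    have h2 := key z h1
    rw [V₂, hz, mul_assoc, heq2, hx] at h2
    have : δ₂ * t ≤ δ₁ * t := by linarith
    exact le_of_mul_le_mul_right (by linarith [this]) ht0
  · -- δ₁ ≥ δ₂ → (i)
    intro hδ x y₁ y₂ hxm hy1m hy2m hlt1 hlt2 hiff z hz
    -- from hiff derive equality of μ-expectations
    have hb : ∀ a c : ℝ, -1 ≤ a → a ≤ 1 → 0 ≤ c → -c ≤ a * c ∧ a * c ≤ c := by
      intro a c h1 h2 h3
      constructor <;> nlinarith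
    have hE1mem : (u x * p + u y₁ * (1 - p)) ∈ Set.Icc (-1:ℝ) 1 := by
      obtain ⟨B1, B2⟩ := hb (u x) p hxm.1 hxm.2 hA₁0.le
      obtain ⟨B3, B4⟩ := hb (u y₁) (1 - p) hy1m.1 hy1m.2 (by linarith)
      exact ⟨by linarith, by linarith⟩
    have hE2mem : (u x * q + u y₂ * (1 - q)) ∈ Set.Icc (-1:ℝ) 1 := by
      obtain ⟨B1, B2⟩ := hb (u x) q hxm.1 hxm.2 hA₂0.le
      obtain ⟨B3, B4⟩ := hb (u y₂) (1 - q) hy2m.1 hy2m.2 (by linarith)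
      exact ⟨by linarith, by linarith⟩
    obtain ⟨z₁, hz₁⟩ := hu hE1mem
    obtain ⟨z₂, hz₂⟩ := hu hE2mem
    have hEeq : u x * p + u y₁ * (1 - p) = u x * q + u y₂ * (1 - q) := by
      have ha := (hiff z₁).mp (by rw [E₁, hz₁])
      have hb := (hiff z₂).mpr (by rw [E₂, hz₂])
      rw [E₂, hz₁] at ha
      rw [E₁, hz₂] at hb
      linarith
    have hceq : (1 - p) * (u x - u y₁) = (1 - q) * (u x - u y₂) := by linear_combination -hEeq
    have hc0 : 0 < (1 - p) * (u x - u y₁) :=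
      mul_pos (by linarith) (by linarith)
    rw [V₁] at hz
    rw [V₂]
    have : δ₂ * ((1 - q) * (u x - u y₂)) ≤ δ₁ * ((1 - p) * (u x - u y₁)) := by
      rw [← hceq]
      exact mul_le_mul_of_nonneg_right hδ (le_of_lt hc0)
    have h1 : δ₂ * (1 - q) * (u x - u y₂) ≤ δ₁ * (1 - p) * (u x - u y₁) := by
      rw [mul_assoc, mul_assoc]; exact this
    linarith [hz, h1]
end

section
/- Let M and M_A be nonempty sets of beliefs on a nonempty finite set S, let u : X → ℝ, and let A ⊆ S satisfy μ(A) > 0 for every μ ∈ M. Suppose every π ∈ M_A lies in the convex hull of M ∪ B(M,A), where B(M,A) = {B(μ,A) : μ ∈ M}. Then for all acts f, g: if ∑_{s∈S} u(f(s))μ(s) ≥ ∑_{s∈S} u(g(s))μ(s) for every μ ∈ M, and ∑_{s∈S} u((fAg)(s))μ(s) ≥ ∑_{s∈S} u(g(s))μ(s) for every μ ∈ M, then ∑_{s∈S} u(f(s))π(s) ≥ ∑_{s∈S} u(g(s))π(s) for every π ∈ M_A. (Necessity direction of Theorem 2: a conservative multi-prior representation satisfies Unambiguous Dynamic Conservatism.)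 -/
open Finset

/-- Necessity direction of Theorem 2: a conservative multi-prior representation
satisfies Unambiguous Dynamic Conservatism. -/
theorem stmt13 {S X : Type*} [Fintype S] [DecidableEq S] [Nonempty S]
    (M MA : Set (S → ℝ)) (hM : M.Nonempty) (hMA : MA.Nonempty)
    (hMb : ∀ μ ∈ M, (∀ s, 0 ≤ μ s) ∧ ∑ s, μ s = 1)
    (hMAb : ∀ π ∈ MA, (∀ s, 0 ≤ π s) ∧ ∑ s, π s = 1)
    (u : X → ℝ)
    (A : Finset S) (hA : ∀ μ ∈ M, 0 < ∑ s ∈ A, μ s)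
    (hsub : ∀ π ∈ MA, π ∈ convexHull ℝ (M ∪ (fun μ => bayes μ A) '' M)) :
    ∀ f g : S → X,
      (∀ μ ∈ M, ∑ s, u (f s) * μ s ≥ ∑ s, u (g s) * μ s) →
      (∀ μ ∈ M, ∑ s, u (splice f g A s) * μ s ≥ ∑ s, u (g s) * μ s) →
      ∀ π ∈ MA, ∑ s, u (f s) * π s ≥ ∑ s, u (g s) * π s := by
  intro f g h1 h2 π hπ
  set φ : (S → ℝ) → ℝ := fun x => ∑ s, (u (f s) - u (g s)) * x s with hφ
  have hlin : IsLinearMap ℝ φ := by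
    constructor
    · intro x y
      simp [φ, mul_add, Finset.sum_add_distrib]
    · intro c x
      simp [φ, Finset.mul_sum, mul_left_comm]
  have hconv : Convex ℝ {x : S → ℝ | 0 ≤ φ x} := convex_halfSpace_ge hlin 0
  have hsubC : M ∪ (fun μ => bayes μ A) '' M ⊆ {x : S → ℝ | 0 ≤ φ x} := by
    rintro x (hx | ⟨μ, hμ, rfl⟩)
    · have := h1 x hx
      simp only [φ, Set.mem_setOf_eq, sub_mul, Finset.sum_sub_distrib]
      linarith
    · have hc := hA μ hμ
      have key : 0 ≤ ∑ s ∈ A, (u (f s) - u (g s)) * μ s := by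
        have h2' := h2 μ hμ
        have hsplit : ∀ h : S → X, ∑ s, u (h s) * μ s
            = ∑ s ∈ A, u (h s) * μ s + ∑ s ∈ Aᶜ, u (h s) * μ s := by
          intro h
          rw [Finset.sum_add_sum_compl]
        have hsp : ∑ s ∈ A, u (splice f g A s) * μ s = ∑ s ∈ A, u (f s) * μ s := by
          apply Finset.sum_congr rfl
          intro s hs; simp [splice, hs]
        have hsp2 : ∑ s ∈ Aᶜ, u (splice f g A s) * μ s = ∑ s ∈ Aᶜ, u (g s) * μ s := by
          apply Finset.sum_congr rfl
          intro s hs; simp only [Finset.mem_compl] at hs; simp [splice, hs]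
        rw [hsplit (splice f g A), hsplit g, hsp, hsp2] at h2'
        simp only [sub_mul, Finset.sum_sub_distrib]
        linarith
      simp only [Set.mem_setOf_eq, φ, bayes]
      have heq : ∑ s, (u (f s) - u (g s)) * (if s ∈ A then μ s / ∑ t ∈ A, μ t else 0)
          = (∑ s ∈ A, (u (f s) - u (g s)) * μ s) / ∑ t ∈ A, μ t := by
        have h1 : ∀ s, (u (f s) - u (g s)) * (if s ∈ A then μ s / ∑ t ∈ A, μ t else 0)
            = if s ∈ A then ((u (f s) - u (g s)) * μ s) / ∑ t ∈ A, μ t else 0 := by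
          intro s; split <;> simp [mul_div_assoc]
        simp only [h1]
        rw [Finset.sum_ite_mem, Finset.univ_inter, Finset.sum_div]
      rw [heq]
      exact div_nonneg key hc.le
  have hmem : π ∈ {x : S → ℝ | 0 ≤ φ x} :=
    convexHull_min hsubC hconv (hsub π hπ)
  simp only [Set.mem_setOf_eq, φ, sub_mul, Finset.sum_sub_distrib] at hmem
  linarith
end

section
/- Let M be a nonempty compact convex set of beliefs on a nonempty finite set S with μ(A) > 0 for every μ ∈ M, let M_A be a nonempty set of beliefs on S, and let u : X → ℝ with [−1,1] contained in the range of u. Assume Unambiguous Dynamic Conservatism: for all acts f, g, if ∑_{s∈S} u(f(s))μ(s) ≥ ∑_{s∈S} u(g(s))μ(s) for every μ ∈ M and ∑_{s∈S} u((fAg)(s))μ(s) ≥ ∑_{s∈S} u(g(s))μ(s) for every μ ∈ M, then ∑_{s∈S} u(f(s))π(s) ≥ ∑_{s∈S} u(g(s))π(s) for every π ∈ M_A. Then M_A is contained in the convex hull of M ∪ B(M,A), where B(M,A) = {B(μ,A) : μ ∈ M}. (Sufficiency direction of Theorem 2.) -/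
open Finset

lemma isCompact_convexJoin {E : Type*} [AddCommGroup E] [Module ℝ E] [TopologicalSpace E]
    [IsTopologicalAddGroup E] [ContinuousSMul ℝ E] {s t : Set E}
    (hs : IsCompact s) (ht : IsCompact t) : IsCompact (convexJoin ℝ s t) := by
  have himg : convexJoin ℝ s t =
      (fun p : ℝ × E × E => (1 - p.1) • p.2.1 + p.1 • p.2.2) ''
        (Set.Icc (0:ℝ) 1 ×ˢ s ×ˢ t) := by
    ext x
    simp only [mem_convexJoin, Set.mem_image, Set.mem_prod, Prod.exists]
    constructor
    · rintro ⟨a, ha, b, hb, hx⟩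
      rw [segment_eq_image] at hx
      obtain ⟨θ, hθ, rfl⟩ := hx
      exact ⟨θ, a, b, ⟨hθ, ha, hb⟩, rfl⟩
    · rintro ⟨θ, a, b, ⟨hθ, ha, hb⟩, rfl⟩
      exact ⟨a, ha, b, hb, by rw [segment_eq_image]; exact ⟨θ, hθ, rfl⟩⟩
  rw [himg]
  refine (isCompact_Icc.prod (hs.prod ht)).image ?_
  exact ((continuous_const.sub continuous_fst).smul (continuous_fst.comp continuous_snd)).add
    (continuous_fst.smul ((continuous_snd.comp continuous_snd)))

/-- Sufficiency direction of Theorem 2: Unambiguous Dynamic Conservatism implies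
the posterior belief set lies in conv(M ∪ B(M,A)). -/
theorem stmt14 {S X : Type*} [Fintype S] [DecidableEq S] [Nonempty S]
    (M MA : Set (S → ℝ)) (hM : M.Nonempty) (hMA : MA.Nonempty)
    (hMcompact : IsCompact M) (hMconvex : Convex ℝ M)
    (hMb : ∀ μ ∈ M, (∀ s, 0 ≤ μ s) ∧ ∑ s, μ s = 1)
    (hMAb : ∀ π ∈ MA, (∀ s, 0 ≤ π s) ∧ ∑ s, π s = 1)
    (u : X → ℝ) (hu : Set.Icc (-1:ℝ) 1 ⊆ Set.range u)
    (A : Finset S) (hA : ∀ μ ∈ M, 0 < ∑ s ∈ A, μ s)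
    (hUDC : ∀ f g : S → X,
      (∀ μ ∈ M, ∑ s, u (f s) * μ s ≥ ∑ s, u (g s) * μ s) →
      (∀ μ ∈ M, ∑ s, u (splice f g A s) * μ s ≥ ∑ s, u (g s) * μ s) →
      ∀ π ∈ MA, ∑ s, u (f s) * π s ≥ ∑ s, u (g s) * π s) :
    MA ⊆ convexHull ℝ (M ∪ (fun μ => bayes μ A) '' M) := by
  intro π hπ
  by_contra hnot
  -- the Bayes image of M is compact
  have hcont : ContinuousOn (fun μ : S → ℝ => bayes μ A) M := by
    rw [continuousOn_pi]
    intro s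
    unfold bayes
    by_cases hs : s ∈ A
    · simp only [hs, if_true]
      exact ((continuous_apply s).continuousOn).div
        ((continuous_finset_sum A fun t _ => continuous_apply t).continuousOn)
        (fun μ hμ => (hA μ hμ).ne')
    · simp only [hs, if_false]
      exact continuousOn_const
  have hcomp2 : IsCompact ((fun μ => bayes μ A) '' M) :=
    hMcompact.image_of_continuousOn hcont
  -- the Bayes image of M is convex
  have hBconv : Convex ℝ ((fun μ => bayes μ A) '' M) := by
    rintro x ⟨μ, hμ, rfl⟩ y ⟨ν, hν, rfl⟩ p q hp hq hpq
    obtain rfl : q = 1 - p := by linarith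
    have hmA : 0 < ∑ s ∈ A, μ s := hA μ hμ
    have hnA : 0 < ∑ s ∈ A, ν s := hA ν hν
    set mA := ∑ s ∈ A, μ s
    set nA := ∑ s ∈ A, ν s
    set D : ℝ := p * nA + (1 - p) * mA with hD
    have hDpos : 0 < D := by
      rcases lt_or_eq_of_le hp with hp' | hp'
      · have h1 : 0 < p * nA := mul_pos hp' hnA
        have h2 : 0 ≤ (1 - p) * mA := mul_nonneg hq hmA.le
        linarith
      · rw [hD, ← hp']
        simpa using hmA
    have hDpos' : 0 < p * nA - p * mA + mA := by
      rw [hD] at hDpos; linarith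
    set lam : ℝ := p * nA / D with hlam
    have hlam0 : 0 ≤ lam := div_nonneg (mul_nonneg hp hnA.le) hDpos.le
    have hlam1 : 1 - lam = (1 - p) * mA / D := by
      rw [hlam, hD]
      have hD0 : p * nA + (1 - p) * mA ≠ 0 := hDpos.ne'
      rw [eq_div_iff hD0, sub_mul, div_mul_cancel₀ _ hD0]; ring
    have hlam1' : (0:ℝ) ≤ 1 - lam := by
      rw [hlam1]
      exact div_nonneg (mul_nonneg hq hmA.le) hDpos.le
    set κ : S → ℝ := fun s => lam * μ s + (1 - lam) * ν s with hκ
    have hκM : κ ∈ M := by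
      have hsum : lam + (1 - lam) = 1 := by ring
      have hmem := hMconvex hμ hν hlam0 hlam1' hsum
      convert hmem using 1
      funext s; simp [hκ]
    refine ⟨κ, hκM, ?_⟩
    have hκA : ∑ s ∈ A, κ s = mA * nA / D := by
      simp only [hκ]
      rw [Finset.sum_add_distrib, ← Finset.mul_sum, ← Finset.mul_sum, hlam, hlam1, hD]
      field_simp
      ring
    funext s
    unfold bayes
    simp only [Pi.add_apply, Pi.smul_apply, smul_eq_mul]
    by_cases hs : s ∈ A
    · simp only [hs, if_true, hκA]
      show (lam * μ s + (1 - lam) * ν s) / (mA * nA / D) = p * (μ s / mA) + (1 - p) * (ν s / nA)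
      have hD0 : D ≠ 0 := hDpos.ne'
      rw [hlam1, hlam]
      field_simp
    · simp [hs]
  have hBne : ((fun μ => bayes μ A) '' M).Nonempty := hM.image _
  -- hence the convex hull is compact, so closed
  have hCcomp : IsCompact (convexHull ℝ (M ∪ (fun μ => bayes μ A) '' M)) := by
    rw [convexHull_union hM hBne, hMconvex.convexHull_eq, hBconv.convexHull_eq]
    exact isCompact_convexJoin hMcompact hcomp2
  obtain ⟨φ, c, hπc, hsep⟩ :=
    geometric_hahn_banach_point_closed (convex_convexHull ℝ _) hCcomp.isClosed hnot
  -- represent φ as a vector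
  set a : S → ℝ := fun s => φ (Pi.single s 1) with ha
  have hrep : ∀ ν : S → ℝ, φ ν = ∑ s, a s * ν s := by
    intro ν
    have hν : ν = ∑ s, ν s • (Pi.single s 1 : S → ℝ) := by
      ext t
      simp [Finset.sum_apply, Pi.single_apply]
    conv_lhs => rw [hν]
    rw [map_sum]
    refine Finset.sum_congr rfl fun s _ => ?_
    rw [map_smul]
    simp [ha, mul_comm]
  set d : S → ℝ := fun s => a s - c with hd
  have hkey : ∀ ν : S → ℝ, ∑ s, ν s = 1 → ∑ s, d s * ν s = φ ν - c := by
    intro ν hν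
    rw [hrep]
    simp only [hd, sub_mul, Finset.sum_sub_distrib, ← Finset.mul_sum, hν, mul_one]
  set K : ℝ := 1 + ∑ s, |d s| with hK
  have hKpos : 0 < K := by
    have : (0:ℝ) ≤ ∑ s, |d s| := Finset.sum_nonneg fun s _ => abs_nonneg _
    linarith
  have hdK : ∀ s, |d s| ≤ K := by
    intro s
    have : |d s| ≤ ∑ t, |d t| :=
      Finset.single_le_sum (fun t _ => abs_nonneg (d t)) (Finset.mem_univ s)
    linarith
  have hmem : ∀ s, d s / K ∈ Set.Icc (-1:ℝ) 1 := by
    intro s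
    constructor
    · rw [le_div_iff₀ hKpos]
      have := (abs_le.mp (hdK s)).1
      linarith
    · rw [div_le_iff₀ hKpos]
      have := (abs_le.mp (hdK s)).2
      linarith
  -- choose acts
  have hf : ∀ s, ∃ x : X, u x = d s / K := fun s => by
    obtain ⟨x, hx⟩ := hu (hmem s); exact ⟨x, hx⟩
  choose f hfval using hf
  obtain ⟨g0, hg0⟩ := hu (by constructor <;> norm_num : (0:ℝ) ∈ Set.Icc (-1:ℝ) 1)
  set g : S → X := fun _ => g0 with hg
  have hgsum : ∀ ν : S → ℝ, ∑ s, u (g s) * ν s = 0 := by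
    intro ν; simp [hg, hg0]
  -- positivity of φ ν - c for ν in the hull
  have hposM : ∀ μ ∈ M, c < φ μ := fun μ hμ =>
    hsep μ (subset_convexHull ℝ _ (Set.mem_union_left _ hμ))
  have hposB : ∀ μ ∈ M, c < φ (bayes μ A) := fun μ hμ =>
    hsep _ (subset_convexHull ℝ _ (Set.mem_union_right _ ⟨μ, hμ, rfl⟩))
  -- first UDC hypothesis
  have h1 : ∀ μ ∈ M, ∑ s, u (f s) * μ s ≥ ∑ s, u (g s) * μ s := by
    intro μ hμ
    rw [hgsum]
    have hsum1 : ∑ s, μ s = 1 := (hMb μ hμ).2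
    have heq : ∑ s, u (f s) * μ s = (∑ s, d s * μ s) / K := by
      rw [Finset.sum_div]
      exact Finset.sum_congr rfl fun s _ => by rw [hfval]; ring
    rw [heq, hkey μ hsum1]
    exact le_of_lt (div_pos (sub_pos.mpr (hposM μ hμ)) hKpos)
  -- second UDC hypothesis
  have h2 : ∀ μ ∈ M, ∑ s, u (splice f g A s) * μ s ≥ ∑ s, u (g s) * μ s := by
    intro μ hμ
    rw [hgsum]
    have hμA : 0 < ∑ s ∈ A, μ s := hA μ hμ
    have hbsum : ∑ s, bayes μ A s = 1 := by
      unfold bayes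
      rw [Finset.sum_ite_mem, Finset.univ_inter, ← Finset.sum_div, div_self hμA.ne']
    have hbd : ∑ s, d s * bayes μ A s = φ (bayes μ A) - c := hkey _ hbsum
    have hbd' : ∑ s, d s * bayes μ A s = (∑ s ∈ A, d s * μ s) / (∑ t ∈ A, μ t) := by
      rw [Finset.sum_div,
        ← Finset.sum_subset (Finset.subset_univ A)
          (fun s _ hs => by unfold bayes; simp [hs])]
      refine Finset.sum_congr rfl fun s hs => ?_
      unfold bayes
      simp [hs, mul_div_assoc]
    have hApos : 0 < ∑ s ∈ A, d s * μ s := by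
      have hpos : 0 < ∑ s, d s * bayes μ A s := by
        rw [hbd]; linarith [hposB μ hμ]
      rw [hbd'] at hpos
      rcases div_pos_iff.mp hpos with ⟨h, _⟩ | ⟨_, h⟩
      · exact h
      · exact absurd h (not_lt.mpr hμA.le)
    have heq : ∑ s, u (splice f g A s) * μ s = (∑ s ∈ A, d s * μ s) / K := by
      rw [Finset.sum_div,
        ← Finset.sum_subset (Finset.subset_univ A)
          (fun s _ hs => by unfold splice; simp [hs, hg, hg0])]
      refine Finset.sum_congr rfl fun s hs => ?_
      unfold splice
      simp only [hs, if_true]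
      rw [hfval]
      ring
    rw [heq]
    exact div_nonneg hApos.le hKpos.le
  -- conclusion of UDC contradicts separation
  have hconc := hUDC f g h1 h2 π hπ
  rw [hgsum] at hconc
  have hπsum : ∑ s, π s = 1 := (hMAb π hπ).2
  have heq : ∑ s, u (f s) * π s = (∑ s, d s * π s) / K := by
    rw [Finset.sum_div]
    exact Finset.sum_congr rfl fun s _ => by rw [hfval]; ring
  rw [heq, hkey π hπsum] at hconc
  have hge : 0 ≤ φ π - c := by
    by_contra h
    push_neg at h
    have : (φ π - c) / K < 0 := div_neg_of_neg_of_pos h hKpos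
    linarith
  linarith
end

section
/- Let μ be a belief on a nonempty finite set S, let A ⊆ S satisfy μ(A) > 0, let u : X → ℝ with [−1,1] contained in the range of u, and let M_A be a nonempty closed convex set of beliefs on S. Assume that for all acts f, g: if ∑_{s∈S} u(f(s))μ(s) ≥ ∑_{s∈S} u(g(s))μ(s) and ∑_{s∈S} u((fAg)(s))μ(s) ≥ ∑_{s∈S} u(g(s))μ(s), then ∑_{s∈S} u(f(s))π(s) ≥ ∑_{s∈S} u(g(s))π(s) for every π ∈ M_A. Then there exists a nonempty closed convex set W ⊆ [0,1] such that M_A = { δ·μ + (1−δ)·B(μ,A) : δ ∈ W }. (Corollary to Theorem 2: if the initial preference is complete, i.e., a single prior, then posterior belief sets are parametrized by a set of confidence weights.) -/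
open Finset

/-- Corollary to Theorem 2: with a single prior, posterior belief sets are
parametrized by a nonempty closed convex set of confidence weights. -/
theorem stmt15 {S X : Type*} [Fintype S] [DecidableEq S] [Nonempty S]
    (μ : S → ℝ) (hμ0 : ∀ s, 0 ≤ μ s) (hμ1 : ∑ s, μ s = 1)
    (A : Finset S) (hA : 0 < ∑ s ∈ A, μ s)
    (u : X → ℝ) (hu : Set.Icc (-1:ℝ) 1 ⊆ Set.range u)
    (MA : Set (S → ℝ)) (hMA : MA.Nonempty) (hMAclosed : IsClosed MA)
    (hMAconvex : Convex ℝ MA)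
    (hMAb : ∀ π ∈ MA, (∀ s, 0 ≤ π s) ∧ ∑ s, π s = 1)
    (hDC : ∀ f g : S → X,
      ∑ s, u (f s) * μ s ≥ ∑ s, u (g s) * μ s →
      ∑ s, u (splice f g A s) * μ s ≥ ∑ s, u (g s) * μ s →
      ∀ π ∈ MA, ∑ s, u (f s) * π s ≥ ∑ s, u (g s) * π s) :
    ∃ W : Set ℝ, W.Nonempty ∧ IsClosed W ∧ Convex ℝ W ∧ W ⊆ Set.Icc (0:ℝ) 1 ∧
      MA = {π : S → ℝ | ∃ δ ∈ W,
        π = fun s => δ * μ s + (1 - δ) * bayes μ A s} := by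
  classical
  set m : ℝ := ∑ s ∈ A, μ s with hm
  have hm0 : m ≠ 0 := ne_of_gt hA
  set ν : S → ℝ := bayes μ A with hνdef
  have hνs : ∀ s, ν s = if s ∈ A then μ s / m else 0 := fun s => rfl
  have hν1 : ∑ s, ν s = 1 := by
    simp only [hνs]
    rw [Finset.sum_ite_mem, Finset.univ_inter, ← Finset.sum_div, ← hm, div_self hm0]
  -- key property derived from dynamic consistency
  have key : ∀ π ∈ MA, ∀ z : S → ℝ,
      0 ≤ ∑ s, z s * μ s → 0 ≤ ∑ s ∈ A, z s * μ s → 0 ≤ ∑ s, z s * π s := by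
    intro π hπ z h1 h2
    set c : ℝ := (∑ s, |z s|) + 1 with hc
    have hcpos : 0 < c := by positivity
    have hzc : ∀ s, z s / c ∈ Set.Icc (-1:ℝ) 1 := by
      intro s
      have h1 : |z s| ≤ ∑ t, |z t| :=
        Finset.single_le_sum (fun t _ => abs_nonneg (z t)) (mem_univ s)
      have h2 : |z s| ≤ c := by
        calc |z s| ≤ ∑ t, |z t| := h1
        _ ≤ c := by simp [hc]
      have := abs_le.mp h2
      constructor
      · rw [le_div_iff₀ hcpos]; linarith [this.1]
      · rw [div_le_one hcpos]; exact this.2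
    have hf : ∀ s, ∃ x, u x = z s / c := fun s => hu (hzc s)
    choose f hf using hf
    obtain ⟨x0, hx0⟩ : ∃ x, u x = (0:ℝ) := hu (by norm_num)
    have hg0 : ∀ π' : S → ℝ, ∑ s, u ((fun _ => x0) s) * π' s = 0 := by
      intro π'; simp [hx0]
    have hDC1 : ∑ s, u (f s) * μ s ≥ ∑ s, u ((fun _ => x0) s) * μ s := by
      rw [hg0]
      simp only [hf]
      have : ∑ s, z s / c * μ s = (∑ s, z s * μ s) / c := by
        rw [Finset.sum_div]; exact Finset.sum_congr rfl fun s _ => by ring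
      rw [this]
      positivity
    have hDC2 : ∑ s, u (splice f (fun _ => x0) A s) * μ s
        ≥ ∑ s, u ((fun _ => x0) s) * μ s := by
      rw [hg0]
      have : ∑ s, u (splice f (fun _ => x0) A s) * μ s
          = (∑ s ∈ A, z s * μ s) / c := by
        simp only [splice, apply_ite u, hf, hx0, ite_mul, zero_mul]
        rw [Finset.sum_ite_mem, Finset.univ_inter, Finset.sum_div]
        exact Finset.sum_congr rfl fun s _ => by ring
      rw [this]
      positivity
    have := hDC f (fun _ => x0) hDC1 hDC2 π hπ
    rw [hg0] at this
    simp only [hf] at this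
    have heq : ∑ s, z s / c * π s = (∑ s, z s * π s) / c := by
      rw [Finset.sum_div]; exact Finset.sum_congr rfl fun s _ => by ring
    rw [heq, ge_iff_le, le_div_iff₀ hcpos, zero_mul] at this
    exact this
  -- every element of MA lies on the segment between μ and ν
  have hseg : ∀ π ∈ MA, π ∈ segment ℝ μ ν := by
    intro π hπ
    by_contra hns
    have hsegcl : IsClosed (segment ℝ μ ν) := by
      rw [segment_eq_image]
      refine (isCompact_Icc.image ?_).isClosed
      fun_prop
    obtain ⟨l, u0, hls, hlπ⟩ :=
      geometric_hahn_banach_closed_point (convex_segment μ ν) hsegcl hns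
    set z : S → ℝ := fun s => u0 - l (Pi.single s 1) with hz
    have hlw : ∀ w : S → ℝ, l w = ∑ s, w s * l (Pi.single s 1) := by
      intro w
      conv_lhs => rw [← Finset.univ_sum_single w]
      rw [map_sum]
      refine Finset.sum_congr rfl fun s _ => ?_
      have h1 : Pi.single s (w s) = w s • (Pi.single s 1 : S → ℝ) := by
        funext t
        by_cases ht : t = s <;> simp [Pi.single_apply, ht]
      rw [h1, map_smul, smul_eq_mul]
    have hzw : ∀ w : S → ℝ, ∑ s, z s * w s = u0 * (∑ s, w s) - l w := by
      intro w
      rw [hlw w, Finset.mul_sum, ← Finset.sum_sub_distrib]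
      refine Finset.sum_congr rfl fun s _ => ?_
      simp only [hz]
      ring
    have hzμ : 0 ≤ ∑ s, z s * μ s := by
      rw [hzw, hμ1, mul_one]
      have := hls μ (left_mem_segment ℝ μ ν)
      linarith
    have hzν : 0 < ∑ s, z s * ν s := by
      rw [hzw, hν1, mul_one]
      have := hls ν (right_mem_segment ℝ μ ν)
      linarith
    have hzA : 0 ≤ ∑ s ∈ A, z s * μ s := by
      have : ∑ s, z s * ν s = (∑ s ∈ A, z s * μ s) / m := by
        simp only [hνs, mul_ite, mul_zero]
        rw [Finset.sum_ite_mem, Finset.univ_inter, Finset.sum_div]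
        exact Finset.sum_congr rfl fun s _ => by ring
      rw [this, lt_div_iff₀ hA, zero_mul] at hzν
      exact hzν.le
    have hπ1 : ∑ s, π s = 1 := (hMAb π hπ).2
    have := key π hπ z hzμ hzA
    rw [hzw, hπ1, mul_one] at this
    linarith
  -- assemble W
  set φ : ℝ → (S → ℝ) := fun δ => fun s => δ * μ s + (1 - δ) * ν s with hφ
  have hφc : Continuous φ := by fun_prop
  refine ⟨Set.Icc 0 1 ∩ φ ⁻¹' MA, ?_, ?_, ?_, Set.inter_subset_left, ?_⟩
  · obtain ⟨π, hπ⟩ := hMA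
    obtain ⟨a, b, ha, hb, hab, habπ⟩ := hseg π hπ
    refine ⟨a, ⟨ha, by linarith⟩, ?_⟩
    have : φ a = π := by
      funext s
      have := congrFun habπ s
      simp only [Pi.add_apply, Pi.smul_apply, smul_eq_mul] at this
      simp only [hφ]
      rw [show (1 : ℝ) - a = b by linarith]
      exact this
    simpa [this] using hπ
  · exact isClosed_Icc.inter (hMAclosed.preimage hφc)
  · intro a ha b hb p q hp hq hpq
    constructor
    · exact (convex_Icc (0:ℝ) 1) ha.1 hb.1 hp hq hpq
    · have : φ (p * a + q * b) = p • φ a + q • φ b := by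
        funext s
        simp only [hφ, Pi.add_apply, Pi.smul_apply, smul_eq_mul]
        linear_combination (-(ν s)) * hpq
      show φ _ ∈ MA
      rw [show p • a + q • b = p * a + q * b from rfl, this]
      exact hMAconvex ha.2 hb.2 hp hq hpq
  · ext π
    simp only [Set.mem_setOf_eq]
    constructor
    · intro hπ
      obtain ⟨a, b, ha, hb, hab, habπ⟩ := hseg π hπ
      have hφa : φ a = π := by
        funext s
        have := congrFun habπ s
        simp only [Pi.add_apply, Pi.smul_apply, smul_eq_mul] at this
        simp only [hφ]
        rw [show (1 : ℝ) - a = b by linarith]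
        exact this
      exact ⟨a, ⟨⟨ha, by linarith⟩, by simpa [hφa] using hπ⟩, hφa.symm⟩
    · rintro ⟨δ, ⟨_, hδMA⟩, rfl⟩
      exact hδMA
end

section
/- Let μ and μ_A be beliefs on a nonempty finite set S, let u : X → ℝ with [−1,1] contained in the range of u, and let A ⊆ S satisfy μ(A) = 0 (A is a null event, so that ∑_{s∈S} u((fAg)(s))μ(s) = ∑_{s∈S} u(g(s))μ(s) for all acts f, g). Assume that for all acts f, g: ∑_{s∈S} u(f(s))μ(s) ≥ ∑_{s∈S} u(g(s))μ(s) implies ∑_{s∈S} u(f(s))μ_A(s) ≥ ∑_{s∈S} u(g(s))μ_A(s). Then μ_A = μ. (Claim of footnote 5: a conservative agent reacts to a null event by completely ignoring it, i.e., Dynamic Conservatism at a null event forces the conditional belief to equal the prior.) -/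
open Finset

/-- Footnote 5: Dynamic Conservatism at a null event forces the conditional
belief to equal the prior. -/
theorem stmt16 {S X : Type*} [Fintype S] [DecidableEq S] [Nonempty S]
    (μ μA : S → ℝ)
    (hμ0 : ∀ s, 0 ≤ μ s) (hμ1 : ∑ s, μ s = 1)
    (hμA0 : ∀ s, 0 ≤ μA s) (hμA1 : ∑ s, μA s = 1)
    (u : X → ℝ) (hu : Set.Icc (-1:ℝ) 1 ⊆ Set.range u)
    (A : Finset S) (hA : ∑ s ∈ A, μ s = 0)
    (hDC : ∀ f g : S → X,
      ∑ s, u (f s) * μ s ≥ ∑ s, u (g s) * μ s →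
      ∑ s, u (f s) * μA s ≥ ∑ s, u (g s) * μA s) :
    μA = μ := by
  have key : ∀ v : S → ℝ, (∀ s, v s ∈ Set.Icc (-1:ℝ) 1) →
      ∑ s, v s * μA s = ∑ s, v s * μ s := by
    intro v hv
    -- the average c lies in [-1,1]
    set c : ℝ := ∑ s, v s * μ s with hc
    have hc1 : c ≤ 1 := by
      rw [hc, ← hμ1]
      apply Finset.sum_le_sum
      intro s _
      nlinarith [(hv s).2, hμ0 s]
    have hcm1 : (-1:ℝ) ≤ c := by
      have : ∑ s, (-1 : ℝ) * μ s ≤ c := by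
        rw [hc]
        apply Finset.sum_le_sum
        intro s _
        nlinarith [(hv s).1, hμ0 s]
      simpa [hμ1, ← Finset.sum_mul] using this
    -- choose acts realizing v and the constant c
    have hf : ∀ s, ∃ x : X, u x = v s := fun s => hu (hv s)
    choose f hfu using hf
    obtain ⟨y, hy⟩ := hu ⟨hcm1, hc1⟩
    have hgμ : ∑ s, u ((fun _ => y) s) * μ s = c := by
      simp only [hy]; rw [← Finset.mul_sum, hμ1, mul_one]
    have hfμ : ∑ s, u (f s) * μ s = c := by simp [hfu, hc]
    have h1 := hDC f (fun _ => y) (by rw [hgμ, hfμ])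
    have h2 := hDC (fun _ => y) f (by rw [hgμ, hfμ])
    have hgA : ∑ s, u ((fun _ => y) s) * μA s = c := by
      simp only [hy]; rw [← Finset.mul_sum, hμA1, mul_one]
    have hfA : ∑ s, u (f s) * μA s = ∑ s, v s * μA s := by simp [hfu]
    rw [hfA, hgA] at h1 h2
    linarith
  funext s
  have := key (fun t => if t = s then 1 else 0) (by
    intro t
    by_cases h : t = s <;> simp [h] <;> norm_num)
  simpa using this
end
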